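/- For integers αm ≥ α ≥ 1, μ > 0 and p ∈ [0,1]: ∑_{φ=α}^{αm} μφ C(αm, φ)(1-p)^φ p^{αm-φ} ≤ μ α m C(αm-1, α-1)(1-p)^α. -/

import Mathlib

theorem prob_access_upper_bound (α m : ℕ) (μ p : ℝ)
    (hα : 1 ≤ α) (hαm : α ≤ α * m) (hμ : 0 < μ) (hp0 : 0 ≤ p) (hp1 : p ≤ 1) :
    ∑ φ ∈ Finset.Icc α (α * m),
        μ * (φ : ℝ) * ((α * m).choose φ : ℝ) * (1 - p) ^ φ * p ^ (α * m - φ) ≤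
      μ * α * m * ((α * m - 1).choose (α - 1) : ℝ) * (1 - p) ^ α := by
  set n := α * m with hn
  have hn1 : 1 ≤ n := hα.trans hαm
  have hq0 : (0:ℝ) ≤ 1 - p := by linarith
  -- termwise bound
  have step1 : ∑ φ ∈ Finset.Icc α n,
      μ * (φ : ℝ) * (n.choose φ : ℝ) * (1 - p) ^ φ * p ^ (n - φ) ≤
      ∑ φ ∈ Finset.Icc α n,
      μ * (n : ℝ) * ((n - 1).choose (α - 1) : ℝ) * (((n - α).choose (φ - α)) : ℝ)
        * (1 - p) ^ φ * p ^ (n - φ) := by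
    apply Finset.sum_le_sum
    intro φ hφ
    rw [Finset.mem_Icc] at hφ
    obtain ⟨hαφ, hφn⟩ := hφ
    have hφ1 : 1 ≤ φ := hα.trans hαφ
    have key1 : φ * n.choose φ = n * (n - 1).choose (φ - 1) := by
      have h := Nat.add_one_mul_choose_eq (n - 1) (φ - 1)
      have e1 : n - 1 + 1 = n := by omega
      have e2 : φ - 1 + 1 = φ := by omega
      rw [e1, e2] at h
      rw [mul_comm]
      exact h.symm
    have key2 : (n - 1).choose (φ - 1) ≤ (n - 1).choose (α - 1) * (n - α).choose (φ - α) := by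
      have h := Nat.choose_mul (n := n - 1) (k := φ - 1) (s := α - 1)
        (by omega)
      have hpos : 1 ≤ (φ - 1).choose (α - 1) := Nat.choose_pos (by omega)
      have h1 : (n - 1) - (α - 1) = n - α := by omega
      have h2 : (φ - 1) - (α - 1) = φ - α := by omega
      rw [h1, h2] at h
      calc (n - 1).choose (φ - 1) ≤ (n - 1).choose (φ - 1) * (φ - 1).choose (α - 1) :=
            Nat.le_mul_of_pos_right _ hpos
        _ = (n - 1).choose (α - 1) * (n - α).choose (φ - α) := h
    have hnat : φ * n.choose φ ≤ n * ((n - 1).choose (α - 1) * (n - α).choose (φ - α)) := by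
      rw [key1]; exact Nat.mul_le_mul_left _ key2
    have hreal : (φ : ℝ) * (n.choose φ : ℝ) ≤
        (n : ℝ) * ((n - 1).choose (α - 1) : ℝ) * ((n - α).choose (φ - α) : ℝ) := by
      rw [mul_assoc]
      exact_mod_cast Nat.cast_le.mpr hnat
    have hnn : (0:ℝ) ≤ (1 - p) ^ φ * p ^ (n - φ) :=
      mul_nonneg (pow_nonneg hq0 _) (pow_nonneg hp0 _)
    calc μ * (φ : ℝ) * (n.choose φ : ℝ) * (1 - p) ^ φ * p ^ (n - φ)
        = μ * ((φ : ℝ) * (n.choose φ : ℝ)) * ((1 - p) ^ φ * p ^ (n - φ)) := by ring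
      _ ≤ μ * ((n : ℝ) * ((n - 1).choose (α - 1) : ℝ) * ((n - α).choose (φ - α) : ℝ))
            * ((1 - p) ^ φ * p ^ (n - φ)) := by
          apply mul_le_mul_of_nonneg_right _ hnn
          exact mul_le_mul_of_nonneg_left hreal hμ.le
      _ = μ * (n : ℝ) * ((n - 1).choose (α - 1) : ℝ) * (((n - α).choose (φ - α)) : ℝ)
            * (1 - p) ^ φ * p ^ (n - φ) := by ring
  refine step1.trans ?_
  -- factor constants and evaluate the remaining binomial sum
  have step2 : ∑ φ ∈ Finset.Icc α n, (((n - α).choose (φ - α)) : ℝ)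
      * (1 - p) ^ φ * p ^ (n - φ) = (1 - p) ^ α := by
    have hre : ∑ φ ∈ Finset.Icc α n, (((n - α).choose (φ - α)) : ℝ)
        * (1 - p) ^ φ * p ^ (n - φ)
        = ∑ j ∈ Finset.range (n - α + 1), (((n - α).choose j) : ℝ)
            * (1 - p) ^ (α + j) * p ^ ((n - α) - j) := by
      apply Finset.sum_nbij' (fun φ => φ - α) (fun j => α + j)
      · intro a ha; rw [Finset.mem_Icc] at ha; simp; omega
      · intro a ha; rw [Finset.mem_range] at ha; rw [Finset.mem_Icc]; omega
      · intro a ha; rw [Finset.mem_Icc] at ha; omega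
      · intro a ha; omega
      · intro a ha
        rw [Finset.mem_Icc] at ha
        have h1 : α + (a - α) = a := by omega
        have h2 : n - α - (a - α) = n - a := by omega
        rw [h1, h2]
    rw [hre]
    have := add_pow (1 - p) p (n - α)
    simp only [sub_add_cancel, one_pow] at this
    calc ∑ j ∈ Finset.range (n - α + 1), (((n - α).choose j) : ℝ)
          * (1 - p) ^ (α + j) * p ^ ((n - α) - j)
        = (1 - p) ^ α * ∑ j ∈ Finset.range (n - α + 1),
            (1 - p) ^ j * p ^ ((n - α) - j) * (((n - α).choose j) : ℝ) := by
          rw [Finset.mul_sum]; apply Finset.sum_congr rfl; intro j hj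
          rw [pow_add]; ring
      _ = (1 - p) ^ α * 1 := by rw [← this]
      _ = (1 - p) ^ α := by ring
  calc ∑ φ ∈ Finset.Icc α n,
      μ * (n : ℝ) * ((n - 1).choose (α - 1) : ℝ) * (((n - α).choose (φ - α)) : ℝ)
        * (1 - p) ^ φ * p ^ (n - φ)
      = μ * (n : ℝ) * ((n - 1).choose (α - 1) : ℝ) *
          ∑ φ ∈ Finset.Icc α n, (((n - α).choose (φ - α)) : ℝ)
            * (1 - p) ^ φ * p ^ (n - φ) := by
        rw [Finset.mul_sum]; apply Finset.sum_congr rfl; intro φ hφ; ring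
    _ = μ * (n : ℝ) * ((n - 1).choose (α - 1) : ℝ) * (1 - p) ^ α := by rw [step2]
    _ ≤ μ * α * m * ((n - 1).choose (α - 1) : ℝ) * (1 - p) ^ α :=
        le_of_eq (by rw [hn]; push_cast; ring)
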